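/- Let P be an atomic abstract simplex path of dimension n ≥ 2 with a summit at an odd position i (2 ≤ i ≤ k−1, h_i(P) > h_{i±1}(P)), normalized so that (C_{i-1},V_{i-1}) = (0,1), (C_i,V_i) = (1,0), and R^i(P)_2 = 0. Let P̃ = P(i, D, Q) be the summit-move vertex expansion with D = (0,0,0, ¬R^i(P)_3,...,¬R^i(P)_n) and Q = (0,1,2,0,2,1). Then P̃ is admissible: if h_i(P) ≥ 3 then P̃ is atomic, and if h_i(P) = 2 then P̃ is the concatenation of the two atomic paths P̃[1, i+1] and P̃[i+2, k+4]. -/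

import Mathlib

/-- Data of an abstract simplex path of dimension `n`: the vertices (colors) of the
`n`-simplex are indexed by `Fin (n+1)`; `C` and `V` are indexed by positive naturals
(positions `1,…,k-1` are the relevant ones for a path of length `k`). -/
structure SPath (n : ℕ) where
  I : Fin (n + 1) → Bool
  C : ℕ → Fin (n + 1)
  V : ℕ → Bool

namespace SPath

variable {n : ℕ}

/-- The `j`-th simplex `R^j(P)` of the path, defined via the last-occurrence rule. -/
def R (P : SPath n) (j : ℕ) (i : Fin (n + 1)) : Bool :=
  if h : ((Finset.Icc 1 (j - 1)).filter fun m => P.C m = i).Nonempty then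
    P.V (((Finset.Icc 1 (j - 1)).filter fun m => P.C m = i).max' h)
  else P.I i

/-- The height `h_j(P)` of the `j`-th simplex: the number of `1`-entries. -/
def height (P : SPath n) (j : ℕ) : ℕ :=
  (Finset.univ.filter fun i : Fin (n + 1) => P.R j i = true).card

/-- The no-back-flip condition for a path of length `k`. -/
def NoBackFlip (P : SPath n) (k : ℕ) : Prop :=
  ∀ i, 1 ≤ i → i + 1 ≤ k - 1 → P.C i ≠ P.C (i + 1)

/-- A boolean `[n]`-tuple is monochromatic. -/
def Mono (f : Fin (n + 1) → Bool) : Prop := ∃ b, ∀ i, f i = b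

/-- `P` is an atomic path of length `k`. -/
def Atomic (P : SPath n) (k : ℕ) : Prop :=
  NoBackFlip P k ∧ Even k ∧ 2 ≤ k ∧
    (∀ i, P.R 1 i = false) ∧ (∀ i, P.R k i = false) ∧
    ∀ j, 1 < j → j < k → ¬Mono (P.R j)

/-- The subpath of `P` starting at position `a` (the subpath `P[a,b]` has length `b+1-a`). -/
def sub (P : SPath n) (a : ℕ) : SPath n :=
  ⟨fun i => P.R a i, fun m => P.C (a - 1 + m), fun m => P.V (a - 1 + m)⟩

/-- `P` (of length `k`) is admissible: a concatenation of atomic paths. -/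
def Admissible (P : SPath n) (k : ℕ) : Prop :=
  ∃ (r : ℕ) (a : ℕ → ℕ), 1 ≤ r ∧ a 0 = 0 ∧ a r = k ∧
    (∀ s, s < r → a s < a (s + 1)) ∧
    ∀ s, s < r → Atomic (P.sub (a s + 1)) (a (s + 1) - a s)

/-- A `0`-path of length `k`: zero initial simplex and all `V`-values `0`. -/
def IsZeroPath (P : SPath n) (k : ℕ) : Prop :=
  (∀ i, P.I i = false) ∧ ∀ j, 1 ≤ j → j + 1 ≤ k → P.V j = false

end SPath

/-- Number of occurrences of `l` among `(Q a, …, Q b)`. -/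
def cnt {n : ℕ} (Q : ℕ → Fin (n + 1)) (a b : ℕ) (l : Fin (n + 1)) : ℕ :=
  ((Finset.Icc a b).filter fun m => Q m = l).card

/-- The tuple `(Q 1, …, Q t)` describes an `[n]`-cube loop. -/
def IsCubeLoop {n : ℕ} (Q : ℕ → Fin (n + 1)) (t : ℕ) : Prop :=
  1 ≤ t ∧ (∀ l, Even (cnt Q 1 t l)) ∧
    ∀ i j, 1 ≤ i → i < j → j ≤ t → (i, j) ≠ (1, t) → ∃ l, ¬Even (cnt Q i j l)

/-- The tuple `(Q 1, …, Q t)` together with the split `s` describes an `[n]`-cube `p`-path. -/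
def IsCubePath {n : ℕ} (p : Fin (n + 1)) (Q : ℕ → Fin (n + 1)) (t s : ℕ) : Prop :=
  1 ≤ s ∧ s < t ∧ (∀ m, 1 ≤ m → m ≤ t → Q m ≠ p) ∧
    (∀ l, l ≠ p → Even (cnt Q 1 t l)) ∧
    (∀ i j, 1 ≤ i → i < j → j ≤ s → ∃ l, ¬Even (cnt Q i j l)) ∧
    ∀ i j, s + 1 ≤ i → i < j → j ≤ t → ∃ l, ¬Even (cnt Q i j l)

namespace SPath

variable {n : ℕ}

/-- The labels `w_i` used in the vertex and edge expansions. -/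
def w (P : SPath n) (m : ℕ) (D : Fin (n + 1) → Bool) (Q : ℕ → Fin (n + 1)) (i : ℕ) : Bool :=
  if Even (cnt Q 1 i (Q i)) then P.R m (Q i) else D (Q i)

/-- The vertex expansion `P(m, D, Q)` for a cube loop `Q` of length `t`. -/
def vexp (P : SPath n) (m : ℕ) (D : Fin (n + 1) → Bool) (Q : ℕ → Fin (n + 1)) (t : ℕ) :
    SPath n where
  I := P.I
  C := fun j =>
    if j ≤ m - 1 then P.C j
    else if j ≤ m + t - 3 then Q (j + 2 - m)
    else P.C (j + 2 - t)
  V := fun j =>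
    if j ≤ m - 2 then P.V j
    else if j ≤ m + t - 3 then P.w m D Q (j + 2 - m)
    else P.V (j + 2 - t)

/-- The edge expansion `P(m, D, Q, s)` for a cube path `Q` of length `t` with split `s`. -/
def eexp (P : SPath n) (m : ℕ) (D : Fin (n + 1) → Bool) (Q : ℕ → Fin (n + 1)) (t s : ℕ) :
    SPath n where
  I := P.I
  C := fun j =>
    if j ≤ m - 1 then P.C j
    else if j ≤ m + s - 2 then Q (j + 2 - m)
    else if j = m + s - 1 then P.C m
    else if j ≤ m + t - 2 then Q (j + 1 - m)
    else P.C (j + 2 - t)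
  V := fun j =>
    if j ≤ m - 2 then P.V j
    else if j ≤ m + s - 2 then P.w m D Q (j + 2 - m)
    else if j = m + s - 1 then P.V m
    else if j ≤ m + t - 2 then P.w m D Q (j + 1 - m)
    else P.V (j + 2 - t)

/-- Two cube vertices differ in exactly one coordinate. -/
def Adjacent (α β : Fin (n + 1) → Bool) : Prop := ∃! l, α l ≠ β l

/-- Membership in `M(A)` for the `2 × (n+1)` array with rows `A0` and `A1`. -/
def MemMA (A0 A1 : Fin (n + 1) → Bool) (α : Fin (n + 1) → Bool) : Prop :=
  ∃ b, ∀ l, (if α l then A1 l else A0 l) = b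

/-- The vertex expansion with data `(m, D, Q)` (loop length `t`) is exhaustive. -/
def ExhVertex (P : SPath n) (m t : ℕ) (D : Fin (n + 1) → Bool) (Q : ℕ → Fin (n + 1)) : Prop :=
  ∃ f : (Fin (n + 1) → Bool) → Fin (n + 1) → Bool,
    ∀ α, MemMA (P.R m) D α →
      (f α ≠ α → MemMA (P.R m) D (f α) ∧ f (f α) = α ∧ Adjacent α (f α)) ∧
      (f α = α → ∃ i, 1 ≤ i ∧ i ≤ t - 1 ∧
        ∀ j, α j = true ↔ ¬Even (cnt Q 1 i j))

/-- The edge expansion with data `(m, D, Q, s)` (length `t`) is exhaustive. -/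
def ExhEdge (P : SPath n) (m t s : ℕ) (D : Fin (n + 1) → Bool) (Q : ℕ → Fin (n + 1)) : Prop :=
  ∃ f : (Fin (n + 1) → Bool) → Fin (n + 1) → Bool,
    ∀ α, MemMA (P.R m) (fun l => if l = P.C m then P.V m else D l) α →
      (f α ≠ α →
        MemMA (P.R m) (fun l => if l = P.C m then P.V m else D l) (f α) ∧
          f (f α) = α ∧ Adjacent α (f α)) ∧
      (f α = α → ∃ i,
        ((α (P.C m) = false ∧ 1 ≤ i ∧ i ≤ s) ∨ (α (P.C m) = true ∧ s + 1 ≤ i ∧ i ≤ t)) ∧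
        ∀ j, j ≠ P.C m → (α j = true ↔ ¬Even (cnt Q 1 i j)))

/-- `(P', k')` is obtained from `(P, k)` by a finite sequence of exhaustive
vertex and edge expansions. -/
inductive Reduces : SPath n → ℕ → SPath n → ℕ → Prop where
  | refl (P : SPath n) (k : ℕ) : Reduces P k P k
  | vstep (P : SPath n) (k m t : ℕ) (D : Fin (n + 1) → Bool) (Q : ℕ → Fin (n + 1))
      (P' : SPath n) (k' : ℕ) :
      2 ≤ m → m + 1 ≤ k → IsCubeLoop Q t → Q 1 = P.C (m - 1) → Q t = P.C m →
      ExhVertex P m t D Q →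
      Reduces (P.vexp m D Q t) (k + t - 2) P' k' → Reduces P k P' k'
  | estep (P : SPath n) (k m t s : ℕ) (D : Fin (n + 1) → Bool) (Q : ℕ → Fin (n + 1))
      (P' : SPath n) (k' : ℕ) :
      2 ≤ m → m + 2 ≤ k → IsCubePath (P.C m) Q t s → Q 1 = P.C (m - 1) → Q t = P.C (m + 1) →
      ExhEdge P m t s D Q →
      Reduces (P.eexp m D Q t s) (k + t - 2) P' k' → Reduces P k P' k'

/-- `P` is reducible: some finite sequence of exhaustive vertex and edge
expansions transforms it into a `0`-path. -/
def Reducible (P : SPath n) (k : ℕ) : Prop :=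
  ∃ P' k', Reduces P k P' k' ∧ IsZeroPath P' k'

end SPath


/-- The label tuple `D = (0, 0, 0, ¬e_3^i, …, ¬e_n^i)` of the summit move. -/
def summitD {n : ℕ} (P : SPath n) (i : ℕ) : Fin (n + 1) → Bool :=
  fun l => if (l : ℕ) ≤ 2 then false else !P.R i l

/-- The `[n]`-cube loop `Q = (0, 1, 2, 0, 2, 1)` of the summit move. -/
def summitQ (n : ℕ) : ℕ → Fin (n + 1) := fun m =>
  if m = 1 then 0 else if m = 2 then 1 else if m = 3 then 2
  else if m = 4 then 0 else if m = 5 then 2 else 1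


namespace SPath

variable {n : ℕ}

lemma R_one' (P : SPath n) (l : Fin (n+1)) : P.R 1 l = P.I l := by
  have h : (Finset.Icc 1 (1-1) : Finset ℕ) = ∅ := rfl
  rw [R, h]
  simp

lemma R_succ' (P : SPath n) {j : ℕ} (hj : 1 ≤ j) (l : Fin (n+1)) :
    P.R (j+1) l = if P.C j = l then P.V j else P.R j l := by
  have h2 : Finset.Icc 1 (j+1-1) = insert j (Finset.Icc 1 (j-1)) := by
    ext x; simp [Finset.mem_Icc, Finset.mem_insert]; omega
  rw [R, h2, Finset.filter_insert]
  by_cases hc : P.C j = l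
  · rw [if_pos hc, if_pos hc]
    have hne : (insert j ((Finset.Icc 1 (j-1)).filter fun m => P.C m = l)).Nonempty :=
      ⟨j, Finset.mem_insert_self _ _⟩
    rw [dif_pos hne]
    have hmax : (insert j ((Finset.Icc 1 (j-1)).filter fun m => P.C m = l)).max' hne = j := by
      apply le_antisymm
      · apply Finset.max'_le
        intro x hx
        rcases Finset.mem_insert.mp hx with rfl | hx
        · exact le_rfl
        · have := (Finset.mem_filter.mp hx).1
          simp [Finset.mem_Icc] at this; omega
      · exact Finset.le_max' _ j (Finset.mem_insert_self _ _)
    rw [hmax]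
  · rw [if_neg hc, if_neg hc, R]

lemma sub_R' (P : SPath n) {a : ℕ} (ha : 1 ≤ a) :
    ∀ j, 1 ≤ j → ∀ l, (P.sub a).R j l = P.R (a - 1 + j) l := by
  intro j
  induction j with
  | zero => omega
  | succ j ih =>
    intro _ l
    rcases Nat.eq_zero_or_pos j with rfl | hj
    · rw [R_one']
      have : a - 1 + 1 = a := by omega
      rw [this]; rfl
    · have e : a - 1 + (j+1) = (a - 1 + j) + 1 := by omega
      rw [e, R_succ' _ hj, R_succ' _ (show 1 ≤ a - 1 + j by omega)]
      have hC : (P.sub a).C j = P.C (a - 1 + j) := rfl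
      have hV : (P.sub a).V j = P.V (a - 1 + j) := rfl
      rw [hC, hV, ih hj]

lemma atomic_sub_one' (P : SPath n) {k : ℕ} (h : P.Atomic k) : (P.sub 1).Atomic k := by
  obtain ⟨h1, h2, h3, h4, h5, h6⟩ := h
  have hR : ∀ j, 1 ≤ j → ∀ l, (P.sub 1).R j l = P.R j l := by
    intro j hj l
    rw [P.sub_R' le_rfl j hj]
    congr 1
    omega
  have hC : ∀ m, (P.sub 1).C m = P.C m := by
    intro m; show P.C (1 - 1 + m) = P.C m; congr 1; omega
  refine ⟨?_, h2, h3, ?_, ?_, ?_⟩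
  · intro j hj1 hj2
    rw [hC, hC]; exact h1 j hj1 hj2
  · intro l; rw [hR 1 le_rfl]; exact h4 l
  · intro l; rw [hR k (by omega)]; exact h5 l
  · intro j hj1 hj2
    have : (P.sub 1).R j = P.R j := funext (hR j (by omega))
    rw [this]; exact h6 j hj1 hj2

lemma vexp_C' (P : SPath n) (m : ℕ) (D : Fin (n+1) → Bool) (Q : ℕ → Fin (n+1)) (t j : ℕ) :
    (P.vexp m D Q t).C j =
      if j ≤ m - 1 then P.C j
      else if j ≤ m + t - 3 then Q (j + 2 - m)
      else P.C (j + 2 - t) := rfl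

lemma vexp_V' (P : SPath n) (m : ℕ) (D : Fin (n+1) → Bool) (Q : ℕ → Fin (n+1)) (t j : ℕ) :
    (P.vexp m D Q t).V j =
      if j ≤ m - 2 then P.V j
      else if j ≤ m + t - 3 then P.w m D Q (j + 2 - m)
      else P.V (j + 2 - t) := rfl

end SPath

set_option maxHeartbeats 1000000

/-- the summit move at an odd summit `i` of an atomic path `P`
(normalized so that `(C_{i-1}, V_{i-1}) = (0,1)`, `(C_i, V_i) = (1,0)`, `R^i(P)_2 = 0`)
yields an admissible path: atomic if `h_i(P) ≥ 3`, and a concatenation of the two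
atomic paths `P~[1, i+1]` and `P~[i+2, k+4]` if `h_i(P) = 2`. -/
theorem summit_move_admissible (n k : ℕ) (hn : 2 ≤ n) (P : SPath n) (hP : P.Atomic k)
    (i : ℕ) (hodd : Odd i) (hi1 : 2 ≤ i) (hik : i + 1 ≤ k)
    (hsum1 : P.height (i - 1) < P.height i) (hsum2 : P.height (i + 1) < P.height i)
    (hC1 : P.C (i - 1) = 0) (hV1 : P.V (i - 1) = true)
    (hC2 : P.C i = 1) (hV2 : P.V i = false)
    (he2 : P.R i 2 = false) :
    SPath.Admissible (P.vexp i (summitD P i) (summitQ n) 6) (k + 4) ∧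
    (3 ≤ P.height i → SPath.Atomic (P.vexp i (summitD P i) (summitQ n) 6) (k + 4)) ∧
    (P.height i = 2 →
      SPath.Atomic ((P.vexp i (summitD P i) (summitQ n) 6).sub 1) (i + 1) ∧
      SPath.Atomic ((P.vexp i (summitD P i) (summitQ n) 6).sub (i + 2)) (k + 3 - i)) := by
  classical
  obtain ⟨m2, rfl⟩ : ∃ m, n = m + 2 := ⟨n - 2, by omega⟩
  obtain ⟨hNBF, hkEven, hk2, hR1, hRk, hMonoP⟩ := hP
  have hi3 : 3 ≤ i := by rcases hodd with ⟨t, ht⟩; omega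
  have hkE : k % 2 = 0 := Nat.even_iff.mp hkEven
  have hiO : i % 2 = 1 := Nat.odd_iff.mp hodd
  have h01 : (0 : Fin (m2+3)) ≠ 1 := by simp [Fin.ext_iff]
  have h02 : (0 : Fin (m2+3)) ≠ 2 := by simp [Fin.ext_iff, Nat.mod_eq_of_lt (show 2 < m2 + 3 by omega)]
  have h12 : (1 : Fin (m2+3)) ≠ 2 := by simp [Fin.ext_iff, Nat.mod_eq_of_lt (show 2 < m2 + 3 by omega)]
  have h10 : (1 : Fin (m2+3)) ≠ 0 := h01.symm
  have h20 : (2 : Fin (m2+3)) ≠ 0 := h02.symm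
  have h21 : (2 : Fin (m2+3)) ≠ 1 := h12.symm
  set Pt := P.vexp i (summitD P i) (summitQ (m2+2)) 6 with hPt
  -- basic facts about R^i(P)
  have hRi0 : P.R i 0 = true := by
    have h := P.R_succ' (j := i-1) (by omega) 0
    rw [show i - 1 + 1 = i by omega] at h
    rw [h, hC1, if_pos rfl, hV1]
  have hRi1 : P.R i 1 = true := by
    by_contra hcon
    have hcon' : P.R i 1 = false := by
      cases hh : P.R i 1 with
      | false => rfl
      | true => exact absurd hh hcon
    have hfun : ∀ l, P.R (i+1) l = P.R i l := by
      intro l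
      rw [P.R_succ' (by omega) l, hC2]
      by_cases hl : (1 : Fin (m2+3)) = l
      · rw [if_pos hl, hV2, ← hl, hcon']
      · rw [if_neg hl]
    have : P.height (i+1) = P.height i := by
      unfold SPath.height
      congr 1
      apply Finset.filter_congr
      intro l _
      rw [hfun]
    omega
  have hsubS : ({0,1} : Finset (Fin (m2+3))) ⊆
      Finset.univ.filter (fun l => P.R i l = true) := by
    intro l hl
    simp only [Finset.mem_insert, Finset.mem_singleton] at hl
    rcases hl with rfl | rfl
    · simp [hRi0]
    · simp [hRi1]
  have hcard01 : ({0,1} : Finset (Fin (m2+3))).card = 2 := by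
    rw [Finset.card_insert_of_notMem (by simp [h01]), Finset.card_singleton]
  have hh2 : 2 ≤ P.height i := by
    have := Finset.card_le_card hsubS
    rw [hcard01] at this
    exact this
  have hcases : P.height i = 2 → ∀ l : Fin (m2+3), l ≠ 0 → l ≠ 1 → P.R i l = false := by
    intro hh l hl0 hl1
    have heq : ({0,1} : Finset (Fin (m2+3))) =
        Finset.univ.filter (fun l => P.R i l = true) := by
      apply Finset.eq_of_subset_of_card_le hsubS
      rw [hcard01]
      exact le_of_eq hh
    by_contra hcon
    have hl : P.R i l = true := by
      cases hh' : P.R i l with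
      | false => exact absurd hh' hcon
      | true => rfl
    have : l ∈ ({0,1} : Finset (Fin (m2+3))) := by
      rw [heq]; simp [hl]
    simp only [Finset.mem_insert, Finset.mem_singleton] at this
    tauto
  have hl0ex : 3 ≤ P.height i →
      ∃ l : Fin (m2+3), P.R i l = true ∧ l ≠ 0 ∧ l ≠ 1 := by
    intro hh
    by_contra hcon
    push_neg at hcon
    have hsub2 : (Finset.univ.filter (fun l => P.R i l = true)) ⊆
        ({0,1} : Finset (Fin (m2+3))) := by
      intro l hl
      simp only [Finset.mem_filter] at hl
      simp only [Finset.mem_insert, Finset.mem_singleton]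
      by_contra hl2
      push_neg at hl2
      exact hl2.2 (hcon l hl.2 hl2.1)
    have hle := Finset.card_le_card hsub2
    rw [hcard01] at hle
    have hE : P.height i = (Finset.univ.filter (fun l => P.R i l = true)).card := rfl
    omega
  -- C evaluations of Pt
  have hClo : ∀ j, j ≤ i - 1 → Pt.C j = P.C j := by
    intro j hj
    rw [hPt, SPath.vexp_C', if_pos hj]
  have hCi : Pt.C i = 1 := by
    rw [hPt, SPath.vexp_C', if_neg (by omega), if_pos (by omega),
      show i + 2 - i = 2 by omega]
    rfl
  have hCi1 : Pt.C (i+1) = 2 := by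
    rw [hPt, SPath.vexp_C', if_neg (by omega), if_pos (by omega),
      show i + 1 + 2 - i = 3 by omega]
    rfl
  have hCi2 : Pt.C (i+2) = 0 := by
    rw [hPt, SPath.vexp_C', if_neg (by omega), if_pos (by omega),
      show i + 2 + 2 - i = 4 by omega]
    rfl
  have hCi3 : Pt.C (i+3) = 2 := by
    rw [hPt, SPath.vexp_C', if_neg (by omega), if_pos (by omega),
      show i + 3 + 2 - i = 5 by omega]
    rfl
  have hChi : ∀ j, i + 4 ≤ j → Pt.C j = P.C (j - 4) := by
    intro j hj
    rw [hPt, SPath.vexp_C', if_neg (by omega), if_neg (by omega),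
      show j + 2 - 6 = j - 4 by omega]
  -- w evaluations
  have hw1 : P.w i (summitD P i) (summitQ (m2+2)) 1 = false := by
    have hc : cnt (summitQ (m2+2)) 1 1 (summitQ (m2+2) 1) = 1 := by
      have h : (Finset.Icc 1 1 : Finset ℕ) = {1} := by decide
      simp [cnt, h, summitQ, Finset.filter_singleton]
    simp only [SPath.w, hc]
    norm_num
    simp [summitD, summitQ]
  have hw2 : P.w i (summitD P i) (summitQ (m2+2)) 2 = false := by
    have hc : cnt (summitQ (m2+2)) 1 2 (summitQ (m2+2) 2) = 1 := by
      have h : (Finset.Icc 1 2 : Finset ℕ) = {1,2} := by decide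
      simp [cnt, h, summitQ, Finset.filter_insert, Finset.filter_singleton, h01]
    simp only [SPath.w, hc]
    norm_num
    simp [summitD, summitQ]
  have hw3 : P.w i (summitD P i) (summitQ (m2+2)) 3 = false := by
    have hc : cnt (summitQ (m2+2)) 1 3 (summitQ (m2+2) 3) = 1 := by
      have h : (Finset.Icc 1 3 : Finset ℕ) = {1,2,3} := by decide
      simp [cnt, h, summitQ, Finset.filter_insert, Finset.filter_singleton, h02, h12]
    simp only [SPath.w, hc]
    norm_num
    simp [summitD, summitQ, Nat.mod_eq_of_lt (show 2 < m2 + 2 + 1 by omega)]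
  have hw4 : P.w i (summitD P i) (summitQ (m2+2)) 4 = true := by
    have hc : cnt (summitQ (m2+2)) 1 4 (summitQ (m2+2) 4) = 2 := by
      have h : (Finset.Icc 1 4 : Finset ℕ) = {1,2,3,4} := by decide
      simp [cnt, h, summitQ, Finset.filter_insert, Finset.filter_singleton, h10, h20]
    simp only [SPath.w, hc]
    norm_num
    show P.R i 0 = true
    exact hRi0
  have hw5 : P.w i (summitD P i) (summitQ (m2+2)) 5 = false := by
    have hc : cnt (summitQ (m2+2)) 1 5 (summitQ (m2+2) 5) = 2 := by
      have h : (Finset.Icc 1 5 : Finset ℕ) = {1,2,3,4,5} := by decide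
      simp [cnt, h, summitQ, Finset.filter_insert, Finset.filter_singleton, h02, h12]
    simp only [SPath.w, hc]
    norm_num
    show P.R i 2 = false
    exact he2
  -- V evaluations of Pt
  have hVlo : ∀ j, j ≤ i - 2 → Pt.V j = P.V j := by
    intro j hj
    rw [hPt, SPath.vexp_V', if_pos hj]
  have hVm1 : Pt.V (i-1) = false := by
    rw [hPt, SPath.vexp_V', if_neg (by omega), if_pos (by omega),
      show i - 1 + 2 - i = 1 by omega]
    exact hw1
  have hVi : Pt.V i = false := by
    rw [hPt, SPath.vexp_V', if_neg (by omega), if_pos (by omega),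
      show i + 2 - i = 2 by omega]
    exact hw2
  have hVi1 : Pt.V (i+1) = false := by
    rw [hPt, SPath.vexp_V', if_neg (by omega), if_pos (by omega),
      show i + 1 + 2 - i = 3 by omega]
    exact hw3
  have hVi2 : Pt.V (i+2) = true := by
    rw [hPt, SPath.vexp_V', if_neg (by omega), if_pos (by omega),
      show i + 2 + 2 - i = 4 by omega]
    exact hw4
  have hVi3 : Pt.V (i+3) = false := by
    rw [hPt, SPath.vexp_V', if_neg (by omega), if_pos (by omega),
      show i + 3 + 2 - i = 5 by omega]
    exact hw5
  have hVhi : ∀ j, i + 4 ≤ j → Pt.V j = P.V (j - 4) := by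
    intro j hj
    rw [hPt, SPath.vexp_V', if_neg (by omega), if_neg (by omega),
      show j + 2 - 6 = j - 4 by omega]
  -- R evaluations of Pt
  have hIPt : ∀ l, Pt.I l = P.I l := fun l => rfl
  have hRtlo : ∀ j, 1 ≤ j → j ≤ i - 1 → ∀ l, Pt.R j l = P.R j l := by
    intro j
    induction j with
    | zero => omega
    | succ j ih =>
      intro _ hj2 l
      rcases Nat.eq_zero_or_pos j with rfl | hj
      · rw [SPath.R_one', SPath.R_one', hIPt]
      · rw [Pt.R_succ' hj, P.R_succ' hj, hClo j (by omega), hVlo j (by omega),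
          ih hj (by omega) l]
  have hRti : ∀ l, Pt.R i l = if l = 0 then false else P.R i l := by
    intro l
    have h1 := Pt.R_succ' (j := i-1) (by omega) l
    rw [show i - 1 + 1 = i by omega] at h1
    have h2 := P.R_succ' (j := i-1) (by omega) l
    rw [show i - 1 + 1 = i by omega] at h2
    rw [h1, hClo (i-1) le_rfl, hC1, hVm1, hRtlo (i-1) (by omega) le_rfl, h2, hC1]
    by_cases hl : l = 0
    · rw [if_pos hl, if_pos hl.symm]
    · rw [if_neg hl, if_neg (fun h => hl h.symm), if_neg (fun h => hl h.symm)]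
  have hRti1 : ∀ l, Pt.R (i+1) l = if l = 0 ∨ l = 1 then false else P.R i l := by
    intro l
    rw [Pt.R_succ' (by omega) l, hCi, hVi, hRti l]
    by_cases hl1 : l = 1
    · rw [if_pos hl1.symm, if_pos (Or.inr hl1)]
    · rw [if_neg (fun h => hl1 h.symm)]
      by_cases hl0 : l = 0
      · rw [if_pos hl0, if_pos (Or.inl hl0)]
      · rw [if_neg hl0, if_neg (not_or.mpr ⟨hl0, hl1⟩)]
  have hRti2 : ∀ l, Pt.R (i+2) l = if l = 0 ∨ l = 1 then false else P.R i l := by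
    intro l
    rw [show i + 2 = (i+1) + 1 by omega, Pt.R_succ' (by omega) l, hCi1, hVi1, hRti1 l]
    by_cases hl2 : l = 2
    · rw [if_pos hl2.symm, if_neg (by rw [hl2]; exact not_or.mpr ⟨h20, h21⟩), hl2, he2]
    · rw [if_neg (fun h => hl2 h.symm)]
  have hRti3 : ∀ l, Pt.R (i+3) l = if l = 1 then false else P.R i l := by
    intro l
    rw [show i + 3 = (i+2) + 1 by omega, Pt.R_succ' (by omega) l, hCi2, hVi2, hRti2 l]
    by_cases hl0 : l = 0
    · rw [if_pos hl0.symm, if_neg (by rw [hl0]; exact h01), hl0, hRi0]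
    · rw [if_neg (fun h => hl0 h.symm)]
      by_cases hl1 : l = 1
      · rw [if_pos (Or.inr hl1), if_pos hl1]
      · rw [if_neg (not_or.mpr ⟨hl0, hl1⟩), if_neg hl1]
  have hRti4 : ∀ l, Pt.R (i+4) l = if l = 1 then false else P.R i l := by
    intro l
    rw [show i + 4 = (i+3) + 1 by omega, Pt.R_succ' (by omega) l, hCi3, hVi3, hRti3 l]
    by_cases hl2 : l = 2
    · rw [if_pos hl2.symm, if_neg (by rw [hl2]; exact h21), hl2, he2]
    · rw [if_neg (fun h => hl2 h.symm)]
  have hRthi : ∀ j, i + 1 ≤ j → ∀ l, Pt.R (j+4) l = P.R j l := by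
    intro j
    induction j with
    | zero => omega
    | succ j ih =>
      intro hj l
      rcases Nat.lt_or_ge j (i+1) with hj' | hj'
      · -- j + 1 = i + 1, i.e. j = i
        have hji : j = i := by omega
        subst hji
        rw [show j + 1 + 4 = (j+4) + 1 by omega, Pt.R_succ' (by omega) l,
          hChi (j+4) (by omega), hVhi (j+4) (by omega),
          show j + 4 - 4 = j by omega, hC2, hV2, hRti4 l,
          P.R_succ' (by omega) l, hC2]
        by_cases hl1 : l = 1
        · subst hl1; simp [hV2]
        · simp [hl1, Ne.symm hl1, hV2]
      · rw [show j + 1 + 4 = (j+4) + 1 by omega, Pt.R_succ' (by omega) l,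
          hChi (j+4) (by omega), hVhi (j+4) (by omega),
          show j + 4 - 4 = j by omega, P.R_succ' (by omega) l, ih hj' l]
  -- no-back-flip for Pt
  have hNBFt : Pt.NoBackFlip (k+4) := by
    intro j hj1 hj2
    rcases Nat.lt_or_ge (j+1) i with hA | hA
    · rw [hClo j (by omega), hClo (j+1) (by omega)]
      exact hNBF j hj1 (by omega)
    · rcases Nat.lt_or_ge j i with hB | hB
      · -- j = i - 1
        have hji : j = i - 1 := by omega
        subst hji
        rw [hClo (i-1) le_rfl, hC1, show i - 1 + 1 = i by omega, hCi]
        exact h01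
      · rcases Nat.lt_or_ge j (i+4) with hC | hC
        · have : j = i ∨ j = i + 1 ∨ j = i + 2 ∨ j = i + 3 := by omega
          rcases this with rfl | rfl | rfl | rfl
          · rw [hCi, hCi1]; exact h12
          · rw [hCi1, show i + 1 + 1 = i + 2 by omega, hCi2]; exact h20
          · rw [hCi2, show i + 2 + 1 = i + 3 by omega, hCi3]; exact h02
          · rw [hCi3, show i + 3 + 1 = i + 4 by omega, hChi (i+4) le_rfl,
              show i + 4 - 4 = i by omega, hC2]
            exact h21
        · rw [hChi j hC, hChi (j+1) (by omega), show j + 1 - 4 = (j - 4) + 1 by omega]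
          exact hNBF (j-4) (by omega) (by omega)
  -- mono helper
  have hnm : ∀ (f : Fin (m2+3) → Bool) (l1 l2 : Fin (m2+3)),
      f l1 = true → f l2 = false → ¬ SPath.Mono f := by
    rintro f l1 l2 ht hf ⟨b, hb⟩
    rw [hb l1] at ht
    rw [hb l2] at hf
    subst ht
    exact Bool.noConfusion hf
  -- non-mono facts
  have hnmi : ¬ SPath.Mono (Pt.R i) := by
    apply hnm _ 1 0
    · rw [hRti 1, if_neg h10]; exact hRi1
    · rw [hRti 0, if_pos rfl]
  have hnmi3 : ¬ SPath.Mono (Pt.R (i+3)) := by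
    apply hnm _ 0 1
    · rw [hRti3 0, if_neg h01]; exact hRi0
    · rw [hRti3 1, if_pos rfl]
  have hnmi4 : ¬ SPath.Mono (Pt.R (i+4)) := by
    apply hnm _ 0 1
    · rw [hRti4 0, if_neg h01]; exact hRi0
    · rw [hRti4 1, if_pos rfl]
  -- R^1 and R^(k+4) of Pt
  have hRt1 : ∀ l, Pt.R 1 l = false := by
    intro l
    rw [SPath.R_one', hIPt, ← SPath.R_one']
    exact hR1 l
  have hRtk : ∀ l, Pt.R (k+4) l = false := by
    intro l
    rw [hRthi k (by omega) l]
    exact hRk l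
  -- sub lemmas
  have hsub1R : ∀ j, 1 ≤ j → ∀ l, (Pt.sub 1).R j l = Pt.R j l := by
    intro j hj l
    rw [Pt.sub_R' le_rfl j hj]
    congr 1
    omega
  have hsub1C : ∀ m, (Pt.sub 1).C m = Pt.C m := by
    intro m; show Pt.C (1 - 1 + m) = Pt.C m; congr 1; omega
  have hsub2R : ∀ j, 1 ≤ j → ∀ l, (Pt.sub (i+2)).R j l = Pt.R (i+1+j) l := by
    intro j hj l
    rw [Pt.sub_R' (by omega) j hj, show i + 2 - 1 + j = i + 1 + j by omega]
  have hsub2C : ∀ m, (Pt.sub (i+2)).C m = Pt.C (i+1+m) := by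
    intro m; rfl
  -- main atomicity in the high case
  have hAtomHigh : 3 ≤ P.height i → Pt.Atomic (k+4) := by
    intro hh
    obtain ⟨l0, hl0R, hl00, hl01⟩ := hl0ex hh
    refine ⟨hNBFt, Nat.even_iff.mpr (by omega), by omega, hRt1, hRtk, ?_⟩
    intro j hj1 hj2
    rcases Nat.lt_or_ge j i with hA | hA
    · have : Pt.R j = P.R j := funext (hRtlo j (by omega) (by omega))
      rw [this]
      exact hMonoP j hj1 (by omega)
    · rcases Nat.lt_or_ge j (i+5) with hB | hB
      · have : j = i ∨ j = i + 1 ∨ j = i + 2 ∨ j = i + 3 ∨ j = i + 4 := by omega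
        rcases this with rfl | rfl | rfl | rfl | rfl
        · exact hnmi
        · apply hnm _ l0 0
          · rw [hRti1 l0, if_neg (not_or.mpr ⟨hl00, hl01⟩)]; exact hl0R
          · rw [hRti1 0, if_pos (Or.inl rfl)]
        · apply hnm _ l0 0
          · rw [hRti2 l0, if_neg (not_or.mpr ⟨hl00, hl01⟩)]; exact hl0R
          · rw [hRti2 0, if_pos (Or.inl rfl)]
        · exact hnmi3
        · exact hnmi4
      · obtain ⟨j', rfl⟩ : ∃ j', j = j' + 4 := ⟨j - 4, by omega⟩
        have : Pt.R (j'+4) = P.R j' := funext (hRthi j' (by omega))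
        rw [this]
        exact hMonoP j' (by omega) (by omega)
  -- the two lower atomic pieces (height = 2 case)
  have hAtomLow1 : P.height i = 2 → (Pt.sub 1).Atomic (i+1) := by
    intro hh
    refine ⟨?_, Nat.even_iff.mpr (by omega), by omega, ?_, ?_, ?_⟩
    · intro j hj1 hj2
      rw [hsub1C, hsub1C]
      exact hNBFt j hj1 (by omega)
    · intro l
      rw [hsub1R 1 le_rfl]
      exact hRt1 l
    · intro l
      rw [hsub1R (i+1) (by omega), hRti1 l]
      by_cases hl : l = 0 ∨ l = 1
      · rw [if_pos hl]
      · rw [if_neg hl]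
        push_neg at hl
        exact hcases hh l hl.1 hl.2
    · intro j hj1 hj2
      have : (Pt.sub 1).R j = Pt.R j := funext (hsub1R j (by omega))
      rw [this]
      rcases Nat.lt_or_ge j i with hA | hA
      · have : Pt.R j = P.R j := funext (hRtlo j (by omega) (by omega))
        rw [this]
        exact hMonoP j hj1 (by omega)
      · have : j = i := by omega
        subst this
        exact hnmi
  have hAtomLow2 : P.height i = 2 → (Pt.sub (i+2)).Atomic (k+3-i) := by
    intro hh
    refine ⟨?_, Nat.even_iff.mpr (by omega), by omega, ?_, ?_, ?_⟩
    · intro j hj1 hj2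
      rw [hsub2C, hsub2C, show i + 1 + (j+1) = (i+1+j) + 1 by omega]
      exact hNBFt (i+1+j) (by omega) (by omega)
    · intro l
      rw [hsub2R 1 le_rfl, show i + 1 + 1 = i + 2 by omega, hRti2 l]
      by_cases hl : l = 0 ∨ l = 1
      · rw [if_pos hl]
      · rw [if_neg hl]
        push_neg at hl
        exact hcases hh l hl.1 hl.2
    · intro l
      rw [hsub2R (k+3-i) (by omega), show i + 1 + (k+3-i) = k + 4 by omega]
      exact hRtk l
    · intro j hj1 hj2
      have : (Pt.sub (i+2)).R j = Pt.R (i+1+j) := funext (hsub2R j (by omega))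
      rw [this]
      rcases Nat.lt_or_ge (i+1+j) (i+5) with hB | hB
      · have : i + 1 + j = i + 3 ∨ i + 1 + j = i + 4 := by omega
        rcases this with he | he
        · rw [he]; exact hnmi3
        · rw [he]; exact hnmi4
      · obtain ⟨j', he⟩ : ∃ j', i + 1 + j = j' + 4 := ⟨i + 1 + j - 4, by omega⟩
        rw [he]
        have : Pt.R (j'+4) = P.R j' := funext (hRthi j' (by omega))
        rw [this]
        exact hMonoP j' (by omega) (by omega)
  -- conclude
  rcases Nat.lt_or_ge (P.height i) 3 with hcase | hcase
  · have hh : P.height i = 2 := by omega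
    have hA1 := hAtomLow1 hh
    have hA2 := hAtomLow2 hh
    refine ⟨?_, fun h3 => absurd h3 (by omega), fun _ => ⟨hA1, hA2⟩⟩
    refine ⟨2, fun s => if s = 0 then 0 else if s = 1 then i + 1 else k + 4,
      by omega, rfl, rfl, ?_, ?_⟩
    · intro s hs
      have : s = 0 ∨ s = 1 := by omega
      rcases this with rfl | rfl <;> norm_num <;> omega
    · intro s hs
      have : s = 0 ∨ s = 1 := by omega
      rcases this with rfl | rfl
      · have e1 : ((if (0:ℕ) = 0 then 0 else if (0:ℕ) = 1 then i + 1 else k + 4) : ℕ) = 0 := rfl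
        have e2 : ((if (1:ℕ) = 0 then 0 else if (1:ℕ) = 1 then i + 1 else k + 4) : ℕ) = i + 1 := rfl
        simp only [e1, e2]
        simpa using hA1
      · norm_num
        rw [show i + 1 + 1 = i + 2 by omega, show k + 4 - (i + 1) = k + 3 - i by omega]
        exact hA2
  · have hAt := hAtomHigh hcase
    refine ⟨?_, fun _ => hAt, fun h2 => absurd h2 (by omega)⟩
    refine ⟨1, fun s => if s = 0 then 0 else k + 4, le_rfl, rfl, rfl, ?_, ?_⟩
    · intro s hs
      have : s = 0 := by omega
      subst this
      norm_num
    · intro s hs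
      have : s = 0 := by omega
      subst this
      have e1 : ((if (0:ℕ) = 0 then 0 else k + 4) : ℕ) = 0 := rfl
      have e2 : ((if (1:ℕ) = 0 then 0 else k + 4) : ℕ) = k + 4 := rfl
      simp only [e1, e2]
      simpa using Pt.atomic_sub_one' hAt
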